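/- Assume m0, m1, m2 are pairwise distinct. Then τ₂(x) ∈ P₂ for every x ∈ ℝ², and the image τ₂(ℝ²) is a proper subset of P₂. If moreover m0, m1, m2 are not collinear, then τ₂(x) = (d10, d20) if and only if x = m0, τ₂(x) = (−d10, d21 − d10) if and only if x = m1, and τ₂(x) = (d21 − d20, −d20) if and only if x = m2. -/

import Mathlib

noncomputable def tau2 (m0 m1 m2 : EuclideanSpace ℝ (Fin 2)) (x : EuclideanSpace ℝ (Fin 2)) :
    ℝ × ℝ :=
  (‖x - m1‖ - ‖x - m0‖, ‖x - m2‖ - ‖x - m0‖)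

section Aux
abbrev E2 := EuclideanSpace ℝ (Fin 2)

lemma tri_aux (x a b : E2) : |‖x - a‖ - ‖x - b‖| ≤ ‖a - b‖ := by
  have h := abs_norm_sub_norm_le (x - a) (x - b)
  rw [show x - a - (x - b) = b - a by abel, norm_sub_rev b a] at h
  exact h

lemma eq_iff_sameRay (x a b : E2) :
    ‖x - a‖ = ‖x - b‖ + ‖b - a‖ ↔ SameRay ℝ (x - b) (b - a) := by
  rw [sameRay_iff_norm_add, show x - b + (b - a) = x - a by abel]

lemma collinear_of_smul (m p q w : E2) (r r' : ℝ) (h1 : p - m = r • w) (h2 : q - m = r' • w) :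
    Collinear ℝ ({m, p, q} : Set E2) := by
  rw [collinear_iff_of_mem (Set.mem_insert m {p, q})]
  refine ⟨w, fun y hy => ?_⟩
  simp only [Set.mem_insert_iff, Set.mem_singleton_iff] at hy
  rcases hy with rfl | rfl | rfl
  · exact ⟨0, by simp⟩
  · exact ⟨r, by rw [vadd_eq_add, ← h1]; abel⟩
  · exact ⟨r', by rw [vadd_eq_add, ← h2]; abel⟩

lemma vertex_collinear {m p q x : E2}
    (hp : ‖x - p‖ = ‖x - m‖ + ‖m - p‖) (hq : ‖x - q‖ = ‖x - m‖ + ‖m - q‖)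
    (hx : x ≠ m) : Collinear ℝ ({m, p, q} : Set E2) := by
  have h1 : SameRay ℝ (x - m) (m - p) := (eq_iff_sameRay x p m).1 hp
  have h2 : SameRay ℝ (x - m) (m - q) := (eq_iff_sameRay x q m).1 hq
  have hxm : x - m ≠ 0 := sub_ne_zero.2 hx
  obtain ⟨r, -, hr⟩ := h1.exists_nonneg_left hxm
  obtain ⟨r', -, hr'⟩ := h2.exists_nonneg_left hxm
  refine collinear_of_smul m p q (x - m) (-r) (-r') ?_ ?_
  · rw [neg_smul, hr]; abel
  · rw [neg_smul, hr']; abel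

lemma collinear_lambda {m0 m1 m2 : E2} (h : Collinear ℝ ({m0, m1, m2} : Set E2))
    (h01 : m0 ≠ m1) : ∃ l : ℝ, m2 - m0 = l • (m1 - m0) := by
  rw [collinear_iff_of_mem (Set.mem_insert m0 {m1, m2})] at h
  obtain ⟨v, hv⟩ := h
  obtain ⟨r1, hr1⟩ := hv m1 (by simp)
  obtain ⟨r2, hr2⟩ := hv m2 (by simp)
  have hm1 : m1 - m0 = r1 • v := by rw [hr1]; simp
  have hm2 : m2 - m0 = r2 • v := by rw [hr2]; simp
  have hr1ne : r1 ≠ 0 := by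
    rintro rfl
    exact h01 (sub_eq_zero.1 (by simpa using hm1)).symm
  exact ⟨r2 / r1, by rw [hm1, hm2, smul_smul, div_mul_cancel₀ _ hr1ne]⟩

lemma norm_coef (c : ℝ) (v : E2) (hc : 0 ≤ c) : ‖c • v‖ = c * ‖v‖ := by
  rw [norm_smul, Real.norm_eq_abs, abs_of_nonneg hc]

end Aux

set_option maxHeartbeats 1000000 in
theorem stmt7 (m0 m1 m2 : EuclideanSpace ℝ (Fin 2))
    (h01 : m0 ≠ m1) (h02 : m0 ≠ m2) (h12 : m1 ≠ m2)
    (d10 d20 d21 : ℝ)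
    (hd10 : d10 = ‖m1 - m0‖) (hd20 : d20 = ‖m2 - m0‖) (hd21 : d21 = ‖m2 - m1‖)
    (P2 : Set (ℝ × ℝ))
    (hP2 : P2 = {t : ℝ × ℝ | |t.1| ≤ d10 ∧ |t.2| ≤ d20 ∧ |t.2 - t.1| ≤ d21}) :
    (∀ x : EuclideanSpace ℝ (Fin 2), tau2 m0 m1 m2 x ∈ P2) ∧
    Set.range (tau2 m0 m1 m2) ⊂ P2 ∧
    (¬ Collinear ℝ ({m0, m1, m2} : Set (EuclideanSpace ℝ (Fin 2))) →
      (∀ x : EuclideanSpace ℝ (Fin 2),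
        (tau2 m0 m1 m2 x = (d10, d20) ↔ x = m0) ∧
        (tau2 m0 m1 m2 x = (-d10, d21 - d10) ↔ x = m1) ∧
        (tau2 m0 m1 m2 x = (d21 - d20, -d20) ↔ x = m2))) := by
  have ha : (0:ℝ) < ‖m1 - m0‖ := norm_pos_iff.2 (sub_ne_zero.2 (Ne.symm h01))
  have hb : (0:ℝ) < ‖m2 - m0‖ := norm_pos_iff.2 (sub_ne_zero.2 (Ne.symm h02))
  have hc : (0:ℝ) < ‖m2 - m1‖ := norm_pos_iff.2 (sub_ne_zero.2 (Ne.symm h12))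
  have ha' : (0:ℝ) < d10 := hd10 ▸ ha
  have hb' : (0:ℝ) < d20 := hd20 ▸ hb
  have hc' : (0:ℝ) < d21 := hd21 ▸ hc
  have hmem : ∀ x : EuclideanSpace ℝ (Fin 2), tau2 m0 m1 m2 x ∈ P2 := by
    intro x
    rw [hP2]
    refine ⟨?_, ?_, ?_⟩
    · rw [hd10]; exact tri_aux x m1 m0
    · rw [hd20]; exact tri_aux x m2 m0
    · rw [hd21]
      have h := tri_aux x m2 m1
      have h2 : (tau2 m0 m1 m2 x).2 - (tau2 m0 m1 m2 x).1 = ‖x - m2‖ - ‖x - m1‖ := by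
        simp only [tau2]; ring
      rw [h2]
      exact h
  refine ⟨hmem, ?_, ?_⟩
  · -- Part 2: proper subset
    rw [Set.ssubset_iff_of_subset (Set.range_subset_iff.2 hmem)]
    by_cases hcol : Collinear ℝ ({m0, m1, m2} : Set (EuclideanSpace ℝ (Fin 2)))
    · -- collinear case
      obtain ⟨l, hl⟩ := collinear_lambda hcol h01
      have hd20' : d20 = |l| * ‖m1 - m0‖ := by
        rw [hd20, hl, norm_smul, Real.norm_eq_abs]
      have hm21 : m2 - m1 = (l - 1) • (m1 - m0) := by
        rw [sub_smul, one_smul, ← hl]; abel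
      have hd21' : d21 = |l - 1| * ‖m1 - m0‖ := by
        rw [hd21, hm21, norm_smul, Real.norm_eq_abs]
      have hl0 : l ≠ 0 := by
        rintro rfl
        rw [zero_smul] at hl
        exact h02 (sub_eq_zero.1 hl).symm
      have hl1 : l ≠ 1 := by
        rintro rfl
        rw [one_smul] at hl
        exact h12 (sub_left_inj.mp hl).symm
      rcases lt_trichotomy l 0 with hlneg | hl0' | hlpos
      · -- l < 0 : missing point (-d10, 0)
        refine ⟨(-d10, 0), ?_, ?_⟩
        · rw [hP2]
          refine ⟨by rw [abs_neg, abs_of_pos ha'], by simpa using le_of_lt hb', ?_⟩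
          rw [zero_sub, neg_neg, abs_of_pos ha', hd10, hd21', abs_of_neg (by linarith : l - 1 < 0)]
          nlinarith
        · rintro ⟨x, hx⟩
          simp only [tau2, Prod.mk.injEq] at hx
          obtain ⟨hx1, hx2⟩ := hx
          rw [hd10] at hx1
          have heq : ‖x - m0‖ = ‖x - m1‖ + ‖m1 - m0‖ := by linarith
          have hray : SameRay ℝ (x - m1) (m1 - m0) := (eq_iff_sameRay x m0 m1).1 heq
          obtain ⟨t, ht0, htx⟩ := hray.exists_nonneg_right (sub_ne_zero.2 (Ne.symm h01))
          have hx0 : x - m0 = (t + 1) • (m1 - m0) := by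
            rw [add_smul, one_smul, ← htx]; abel
          have hx2' : x - m2 = (t + 1 - l) • (m1 - m0) := by
            rw [sub_smul, ← hx0, ← hl]; abel
          have hn0 : ‖x - m0‖ = (t + 1) * ‖m1 - m0‖ := by
            rw [hx0, norm_coef _ _ (by linarith)]
          have hn2 : ‖x - m2‖ = (t + 1 - l) * ‖m1 - m0‖ := by
            rw [hx2', norm_coef _ _ (by linarith)]
          rw [hn0, hn2] at hx2
          have hz : (-l) * ‖m1 - m0‖ = 0 := by linear_combination hx2
          nlinarith [mul_pos (by linarith : (0:ℝ) < -l) ha]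
      · exact absurd hl0' hl0
      · rcases lt_trichotomy l 1 with hlt1 | hle1 | hgt1
        · -- 0 < l < 1 : missing point (d20 - d21, d20)
          refine ⟨(d20 - d21, d20), ?_, ?_⟩
          · rw [hP2]
            refine ⟨?_, by rw [abs_of_pos hb'], ?_⟩
            · rw [hd10, hd20', hd21', abs_of_pos hlpos, abs_of_neg (by linarith : l - 1 < 0),
                abs_le]
              dsimp only
              constructor <;>
                nlinarith [mul_pos hlpos ha, mul_pos (by linarith : (0:ℝ) < 1 - l) ha]
            · rw [show d20 - (d20 - d21) = d21 by ring, abs_of_pos hc']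
          · rintro ⟨x, hx⟩
            simp only [tau2, Prod.mk.injEq] at hx
            obtain ⟨hx1, hx2⟩ := hx
            rw [hd20] at hx2
            have heq : ‖x - m2‖ = ‖x - m0‖ + ‖m0 - m2‖ := by
              rw [norm_sub_rev m0 m2]; linarith
            have hray : SameRay ℝ (x - m0) (m0 - m2) := (eq_iff_sameRay x m2 m0).1 heq
            obtain ⟨t, ht0, htx⟩ := hray.exists_nonneg_right (sub_ne_zero.2 h02)
            have hx0 : x - m0 = (-(t * l)) • (m1 - m0) := by
              rw [htx, show m0 - m2 = (-l) • (m1 - m0) by rw [neg_smul, ← hl]; abel, smul_smul]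
              ring_nf
            have hx1' : x - m1 = (-(t * l) - 1) • (m1 - m0) := by
              rw [sub_smul, ← hx0, one_smul]; abel
            have htl : 0 ≤ t * l := mul_nonneg ht0 (le_of_lt hlpos)
            have hn0 : ‖x - m0‖ = t * l * ‖m1 - m0‖ := by
              rw [hx0, norm_smul, Real.norm_eq_abs, abs_neg, abs_of_nonneg htl]
            have hn1 : ‖x - m1‖ = (t * l + 1) * ‖m1 - m0‖ := by
              rw [hx1', norm_smul, Real.norm_eq_abs,
                show |(-(t * l) - 1)| = t * l + 1 by rw [abs_of_neg (by linarith)]; ring]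
            rw [hn0, hn1, hd20', hd21', abs_of_pos hlpos,
              abs_of_neg (by linarith : l - 1 < 0)] at hx1
            have hz : (2 - 2*l) * ‖m1 - m0‖ = 0 := by linear_combination hx1
            nlinarith [mul_pos (by linarith : (0:ℝ) < 2 - 2*l) ha]
        · exact absurd hle1 hl1
        · -- l > 1 : missing point (0, -d21)
          refine ⟨(0, -d21), ?_, ?_⟩
          · rw [hP2]
            refine ⟨by rw [abs_zero]; linarith, ?_, ?_⟩
            · rw [abs_neg, abs_of_pos hc', hd20', hd21',
                abs_of_pos (by linarith : (0:ℝ) < l), abs_of_pos (by linarith : (0:ℝ) < l - 1)]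
              nlinarith
            · rw [show -d21 - (0:ℝ) = -d21 by ring, abs_neg, abs_of_pos hc']
          · rintro ⟨x, hx⟩
            simp only [tau2, Prod.mk.injEq] at hx
            obtain ⟨hx1, hx2⟩ := hx
            rw [hd21] at hx2
            have heq : ‖x - m1‖ = ‖x - m2‖ + ‖m2 - m1‖ := by linarith
            have hray : SameRay ℝ (x - m2) (m2 - m1) := (eq_iff_sameRay x m1 m2).1 heq
            obtain ⟨t, ht0, htx⟩ := hray.exists_nonneg_right (sub_ne_zero.2 (Ne.symm h12))
            have hx2' : x - m2 = (t * (l - 1)) • (m1 - m0) := by rw [htx, hm21, smul_smul]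
            have htl : 0 ≤ t * (l - 1) := mul_nonneg ht0 (by linarith)
            have hx0 : x - m0 = (t * (l - 1) + l) • (m1 - m0) := by
              rw [add_smul, ← hx2', ← hl]; abel
            have hx1' : x - m1 = (t * (l - 1) + l - 1) • (m1 - m0) := by
              rw [show (t * (l-1) + l - 1) = t * (l-1) + (l-1) by ring, add_smul, ← hx2', ← hm21]
              abel
            have hn0 : ‖x - m0‖ = (t * (l - 1) + l) * ‖m1 - m0‖ := by
              rw [hx0, norm_coef _ _ (by linarith)]
            have hn1 : ‖x - m1‖ = (t * (l - 1) + l - 1) * ‖m1 - m0‖ := by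
              rw [hx1', norm_coef _ _ (by linarith)]
            rw [hn0, hn1] at hx1
            have hz : ‖m1 - m0‖ = 0 := by linear_combination -hx1
            linarith
    · -- non-collinear case : missing point (d10, ⟪m0 - m2, u⟫)
      set u : E2 := (‖m1 - m0‖)⁻¹ • (m0 - m1) with hu
      have hnu : ‖u‖ = 1 := by
        rw [hu, norm_smul, Real.norm_eq_abs, abs_inv, abs_of_pos ha, norm_sub_rev m0 m1,
          inv_mul_cancel₀ (ne_of_gt ha)]
      set L : ℝ := inner ℝ (m0 - m2) u with hL
      have hm01u : m0 - m1 = ‖m1 - m0‖ • u := by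
        rw [hu, smul_smul, mul_inv_cancel₀ (ne_of_gt ha), one_smul]
      refine ⟨(d10, L), ?_, ?_⟩
      · rw [hP2]
        refine ⟨by rw [abs_of_pos ha'], ?_, ?_⟩
        · have h := abs_real_inner_le_norm (m0 - m2) u
          rw [hnu, mul_one, norm_sub_rev m0 m2] at h
          rw [← hL] at h
          rw [hd20]; exact h
        · have hinner : (inner ℝ (m0 - m1) u : ℝ) = ‖m1 - m0‖ := by
            rw [hm01u, real_inner_smul_left, real_inner_self_eq_norm_sq, hnu]
            ring
          have hdiff : L - d10 = inner ℝ (m1 - m2) u := by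
            rw [hL, hd10, ← hinner, ← inner_sub_left,
              show m0 - m2 - (m0 - m1) = m1 - m2 by abel]
          have h2 := abs_real_inner_le_norm (m1 - m2) u
          rw [hnu, mul_one, norm_sub_rev m1 m2] at h2
          rw [hdiff, hd21]
          exact h2
      · rintro ⟨x, hx⟩
        simp only [tau2, Prod.mk.injEq] at hx
        obtain ⟨hx1, hx2⟩ := hx
        rw [hd10] at hx1
        have heq : ‖x - m1‖ = ‖x - m0‖ + ‖m0 - m1‖ := by
          rw [norm_sub_rev m0 m1]; linarith
        have hray : SameRay ℝ (x - m0) (m0 - m1) := (eq_iff_sameRay x m1 m0).1 heq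
        obtain ⟨r, hr0, hr⟩ := hray.exists_nonneg_right (sub_ne_zero.2 h01)
        have hxu : x - m0 = (r * ‖m1 - m0‖) • u := by
          rw [hr, hm01u, smul_smul]
        have hs0 : (0:ℝ) ≤ r * ‖m1 - m0‖ := mul_nonneg hr0 (le_of_lt ha)
        have hnx0 : ‖x - m0‖ = r * ‖m1 - m0‖ := by
          rw [hxu, norm_smul, Real.norm_eq_abs, hnu, mul_one, abs_of_nonneg hs0]
        have hxw : x - m2 = (m0 - m2) + (r * ‖m1 - m0‖) • u := by
          rw [← hxu]; abel
        have hnw : ‖(m0 - m2) + (r * ‖m1 - m0‖) • u‖ = L + r * ‖m1 - m0‖ := by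
          rw [← hxw]
          linarith
        have hiw : (inner ℝ ((m0 - m2) + (r * ‖m1 - m0‖) • u) u : ℝ) = L + r * ‖m1 - m0‖ := by
          rw [inner_add_left, real_inner_smul_left, real_inner_self_eq_norm_sq, hnu, ← hL]
          ring
        have hCS : (inner ℝ ((m0 - m2) + (r * ‖m1 - m0‖) • u) u : ℝ) =
            ‖(m0 - m2) + (r * ‖m1 - m0‖) • u‖ * ‖u‖ := by
          rw [hnu, mul_one, hnw, hiw]
        have hwu := inner_eq_norm_mul_iff_real.1 hCS
        rw [hnu, one_smul] at hwu
        apply hcol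
        have hm02 : m0 - m2 =
            (‖(m0 - m2) + (r * ‖m1 - m0‖) • u‖ - r * ‖m1 - m0‖) • u := by
          rw [sub_smul, ← hwu]; abel
        refine collinear_of_smul m0 m1 m2 u (-‖m1 - m0‖)
          (-(‖(m0 - m2) + (r * ‖m1 - m0‖) • u‖ - r * ‖m1 - m0‖)) ?_ ?_
        · rw [neg_smul, ← hm01u]; abel
        · rw [neg_smul, ← hm02]; abel
  · -- Part 3
    intro hncol x
    have hset1 : ({m1, m0, m2} : Set E2) = {m0, m1, m2} := Set.insert_comm m1 m0 {m2}
    have hset2 : ({m2, m0, m1} : Set E2) = {m0, m1, m2} := by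
      ext y; simp only [Set.mem_insert_iff, Set.mem_singleton_iff]; tauto
    refine ⟨⟨?_, ?_⟩, ⟨?_, ?_⟩, ⟨?_, ?_⟩⟩
    · intro h
      rw [tau2, Prod.mk.injEq] at h
      obtain ⟨hx1, hx2⟩ := h
      rw [hd10] at hx1; rw [hd20] at hx2
      by_contra hxm
      refine hncol (vertex_collinear ?_ ?_ hxm)
      · rw [norm_sub_rev m0 m1]; linarith
      · rw [norm_sub_rev m0 m2]; linarith
    · rintro rfl
      rw [tau2, Prod.mk.injEq]
      constructor
      · rw [sub_self, norm_zero, norm_sub_rev, hd10]; ring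
      · rw [sub_self, norm_zero, norm_sub_rev, hd20]; ring
    · intro h
      rw [tau2, Prod.mk.injEq] at h
      obtain ⟨hx1, hx2⟩ := h
      rw [hd10] at hx1; rw [hd21, hd10] at hx2
      by_contra hxm
      refine hncol (hset1 ▸ vertex_collinear (m := m1) (p := m0) (q := m2) ?_ ?_ hxm)
      · linarith
      · rw [norm_sub_rev m1 m2]; linarith
    · rintro rfl
      rw [tau2, Prod.mk.injEq]
      constructor
      · rw [sub_self, norm_zero, hd10]; ring
      · rw [norm_sub_rev x m2, hd21, hd10]
    · intro h
      rw [tau2, Prod.mk.injEq] at h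
      obtain ⟨hx1, hx2⟩ := h
      rw [hd20] at hx2; rw [hd21, hd20] at hx1
      by_contra hxm
      refine hncol (hset2 ▸ vertex_collinear (m := m2) (p := m0) (q := m1) ?_ ?_ hxm)
      · linarith
      · linarith
    · rintro rfl
      rw [tau2, Prod.mk.injEq]
      constructor
      · rw [hd21, hd20]
      · rw [sub_self, norm_zero, hd20]; ring
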